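/- arXiv:0801.1214 — 2 statements merged into one kernel-verified Lean document; each statement's English description precedes it below -/
import Mathlib

section
/- Let A be a local integral domain with fraction field K, and let B be a local subring of K containing A (so A ⊆ B ⊆ K). If B, regarded as an A-module via the inclusion A ⊆ B, is flat over A, and the inclusion A ⊆ B is a local ring homomorphism (it maps the maximal ideal of A into the maximal ideal of B), then A = B. -/
/-- Auxiliary: a sum over `ULift (Fin 2)` is the sum of the two values. -/
lemma sum_ulift_fin_two {M : Type v} [AddCommMonoid M] (g : ULift.{u} (Fin 2) → M) :
    ∑ i, g i = g ⟨0⟩ + g ⟨1⟩ := by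
  rw [← Equiv.sum_comp (Equiv.ulift (α := Fin 2)).symm g, Fin.sum_univ_two]
  rfl

/-- Auxiliary: the equational criterion for flatness, specialized to a relation
with two terms. -/
lemma flat_pair_aux {R M : Type u} [CommRing R] [AddCommGroup M] [Module R M]
    [Module.Flat R M] {f₀ f₁ : R} {x₀ x₁ : M} (h : f₀ • x₀ + f₁ • x₁ = 0) :
    ∃ (κ : Type u) (_ : Fintype κ) (c₀ c₁ : κ → R) (y : κ → M),
      x₀ = ∑ j, c₀ j • y j ∧ x₁ = ∑ j, c₁ j • y j ∧
      ∀ j, f₀ * c₀ j + f₁ * c₁ j = 0 := by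
  obtain ⟨k, c, y, hx, hc⟩ :=
    Module.Flat.isTrivialRelation_of_sum_smul_eq_zero
      (f := ![f₀, f₁] ∘ ULift.down) (x := ![x₀, x₁] ∘ ULift.down)
      ((sum_ulift_fin_two.{u, 0} _).trans h)
  refine ⟨ULift (Fin k), inferInstance, fun j => c ⟨0⟩ j.down, fun j => c ⟨1⟩ j.down,
    fun j => y j.down, ?_, ?_, fun j => ?_⟩
  · exact (hx ⟨0⟩).trans (Equiv.ulift.sum_comp (fun j => c ⟨0⟩ j • y j)).symm
  · exact (hx ⟨1⟩).trans (Equiv.ulift.sum_comp (fun j => c ⟨1⟩ j • y j)).symm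
  · exact (sum_ulift_fin_two _).symm.trans (hc j.down)

/-- Commutative-algebra core of steps 5–6 of the proof of Theorem 2 of the paper:
if `A` is a local integral domain with fraction field `K`, and `B` is a local
subring of `K` with `A ⊆ B ⊆ K` such that the inclusion `A ⊆ B` is a flat local
ring homomorphism, then `A = B`. -/
theorem eq_of_flat_local_subring_of_fractionRing
    {K : Type*} [Field K] (A B : Subring K)
    [IsLocalRing A] [IsLocalRing B] [IsFractionRing A K]
    (hAB : A ≤ B)
    (hflat : (Subring.inclusion hAB).Flat)
    (hlocal : IsLocalHom (Subring.inclusion hAB)) :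
    A = B := by
  refine le_antisymm hAB fun b hb => ?_
  letI : Algebra A B := (Subring.inclusion hAB).toAlgebra
  haveI fl : Module.Flat A B := hflat
  -- coercion of scalar multiplication
  have hcoe : ∀ (r : A) (z : B), ((r • z : B) : K) = (r : K) * (z : K) := by
    intro r z
    rw [Algebra.smul_def, RingHom.algebraMap_toAlgebra]
    rfl
  set bB : B := ⟨b, hb⟩ with hbB
  obtain ⟨⟨a, s⟩, hs⟩ := IsLocalization.surj (nonZeroDivisors A) (b : K)
  have hs' : (b : K) * ((s : A) : K) = ((a : A) : K) := hs
  have hs0 : ((s : A) : K) ≠ 0 := by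
    simp
  have hrel : ((s : A)) • bB + (-a) • (1 : B) = 0 := by
    apply Subtype.ext
    push_cast [hcoe]
    linear_combination hs'
  obtain ⟨κ, _, c₀, c₁, y, hx0, hx1, hc⟩ := @flat_pair_aux ↥A ↥B _ _ _ fl _ _ _ _ hrel
  -- some summand of the expression for 1 is a unit in B
  have hexists : ∃ j, IsUnit ((c₁ j) • y j : B) := by
    by_contra h
    push_neg at h
    have h1 : (1 : B) ∈ IsLocalRing.maximalIdeal B := by
      rw [hx1]
      exact Ideal.sum_mem _ fun j _ => (IsLocalRing.mem_maximalIdeal _).mpr (h j)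
    exact one_notMem_nonunits ((IsLocalRing.mem_maximalIdeal _).mp h1)
  obtain ⟨j, hj⟩ := hexists
  rw [Algebra.smul_def, RingHom.algebraMap_toAlgebra] at hj
  have hu : IsUnit (c₁ j) := hlocal.map_nonunit _ (isUnit_of_mul_isUnit_left hj)
  obtain ⟨v, hv⟩ := hu.exists_right_inv
  have hvK : ((c₁ j : A) : K) * ((v : A) : K) = 1 := by
    have := congrArg (fun z : A => (z : K)) hv
    push_cast at this
    exact this
  -- the relation coefficients, coerced to K
  have hcK : ((s : A) : K) * ((c₀ j : A) : K) - ((a : A) : K) * ((c₁ j : A) : K) = 0 := by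
    have := congrArg (fun z : A => (z : K)) (hc j)
    push_cast at this
    linear_combination this
  have h1 : ((s : A) : K) * ((b : K) * (c₁ j : K)) = ((s : A) : K) * (c₀ j : K) := by
    linear_combination ((c₁ j : A) : K) * hs' - hcK
  have h2 : (b : K) * ((c₁ j : A) : K) = ((c₀ j : A) : K) := mul_left_cancel₀ hs0 h1
  have hfinal : (b : K) = ((c₀ j * v : A) : K) := by
    push_cast
    linear_combination ((v : A) : K) * h2 - (b : K) * hvK
  rw [hfinal]
  exact (c₀ j * v).2
end

section
/- Let f : X ⟶ Y be a morphism of integral schemes which is flat (for every point x of X the induced ring homomorphism on stalks O_{Y,f(x)} → O_{X,x} is flat) and birational (there exist dense open subschemes U ⊆ X and V ⊆ Y such that f restricts to an isomorphism from U onto V). Then for every point x of X, the induced homomorphism on stalks O_{Y,f(x)} → O_{X,x} is an isomorphism. -/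
open AlgebraicGeometry CategoryTheory TopologicalSpace

/-- Auxiliary: for an integral scheme `Y` and a specialization `y' ⤳ y` where `y'` is the
generic point, the induced map on stalks is injective and every element of the stalk at `y'`
is a fraction of elements coming from the stalk at `y`. -/
lemma fracAux (Y : Scheme.{u}) [IsIntegral Y] {y' y : Y} (hy' : y' = genericPoint Y)
    (h : y' ⤳ y) :
    Function.Injective (Y.presheaf.stalkSpecializes h) ∧
    ∀ k : Y.presheaf.stalk y', ∃ p q : Y.presheaf.stalk y,
      Y.presheaf.stalkSpecializes h q ≠ 0 ∧
      k * Y.presheaf.stalkSpecializes h q = Y.presheaf.stalkSpecializes h p := by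
  subst hy'
  have halg : ConcreteCategory.hom (Y.presheaf.stalkSpecializes h) =
      algebraMap (Y.presheaf.stalk y) Y.functionField :=
    (RingHom.algebraMap_toAlgebra _).symm
  haveI : Nontrivial (Y.presheaf.stalk y) :=
    (algebraMap (Y.presheaf.stalk y) Y.functionField).domain_nontrivial
  constructor
  · rw [halg]
    exact IsFractionRing.injective (Y.presheaf.stalk y) Y.functionField
  · intro k
    obtain ⟨⟨p, q⟩, hk⟩ := IsLocalization.surj (nonZeroDivisors (Y.presheaf.stalk y))
      (k : Y.functionField)
    refine ⟨p, q.1, ?_, ?_⟩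
    · rw [halg]
      exact IsFractionRing.to_map_ne_zero_of_mem_nonZeroDivisors q.2
    · rw [halg]
      exact hk

set_option maxHeartbeats 1000000 in
/-- Scheme-theoretic content of steps 5–7 of the proof of Theorem 2 of the paper:
a flat birational morphism of integral schemes induces an isomorphism on every stalk. -/
theorem stalkMap_isIso_of_flat_birational
    {X Y : Scheme.{u}} [IsIntegral X] [IsIntegral Y] (f : X ⟶ Y)
    (hflat : ∀ x : X, (f.stalkMap x).hom.Flat)
    (hbir : ∃ (U : X.Opens) (V : Y.Opens), Dense (U : Set X) ∧ Dense (V : Set Y) ∧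
      ∃ e : U.toScheme ≅ V.toScheme, e.hom ≫ V.ι = U.ι ≫ f) :
    ∀ x : X, IsIso (f.stalkMap x) := by
  obtain ⟨U, V, hU, hV, e, he⟩ := hbir
  haveI : Nonempty U := by obtain ⟨p, hp⟩ := hU.nonempty; exact ⟨⟨p, hp⟩⟩
  haveI : Nonempty V := by obtain ⟨p, hp⟩ := hV.nonempty; exact ⟨⟨p, hp⟩⟩
  set ηU := genericPoint U.toScheme with hηU
  have h1 : U.ι.base ηU = genericPoint X := genericPoint_eq_of_isOpenImmersion U.ι
  have h3 : e.hom.base ηU = genericPoint V.toScheme := genericPoint_eq_of_isOpenImmersion e.hom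
  have h2 : V.ι.base (genericPoint V.toScheme) = genericPoint Y :=
    genericPoint_eq_of_isOpenImmersion V.ι
  have hη : f.base (genericPoint X) = genericPoint Y := by
    rw [← h1, ← Scheme.Hom.comp_apply, ← he, Scheme.Hom.comp_apply, h3, h2]
  have hiso : IsIso (f.stalkMap (genericPoint X)) := by
    rw [← h1]
    have hiso2 : IsIso ((U.ι ≫ f).stalkMap ηU) := by
      rw [Scheme.Hom.stalkMap_congr_hom (U.ι ≫ f) (e.hom ≫ V.ι) he.symm ηU,
        Scheme.Hom.stalkMap_comp]
      exact @IsIso.comp_isIso _ _ _ _ _ _ _ (Iso.isIso_hom _) (@IsIso.comp_isIso _ _ _ _ _ _ _ (inferInstanceAs (IsIso (Scheme.Hom.stalkMap V.ι (e.hom ηU)))) (inferInstanceAs (IsIso (Scheme.Hom.stalkMap e.hom ηU))))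
    have heq : f.stalkMap (U.ι.base ηU) =
        (U.ι ≫ f).stalkMap ηU ≫ inv (U.ι.stalkMap ηU) := by
      rw [Scheme.Hom.stalkMap_comp]; simp
    rw [heq]
    exact @IsIso.comp_isIso _ _ _ _ _ _ _ hiso2 IsIso.inv_isIso
  intro x
  set A := Y.presheaf.stalk (f.base x) with hA
  set B := X.presheaf.stalk x with hB
  set φ := f.stalkMap x with hφ
  have hgen : genericPoint X ⤳ x := genericPoint_specializes x
  set iB := X.presheaf.stalkSpecializes hgen with hiB
  set jA := Y.presheaf.stalkSpecializes (f.base.hom.map_specializes hgen) with hjA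
  set ψ0 := f.stalkMap (genericPoint X) with hψ0
  have hsq : jA ≫ ψ0 = φ ≫ iB := Scheme.Hom.stalkSpecializes_stalkMap f (genericPoint X) x hgen
  have hsq' : ∀ a : A, ψ0 (jA a) = iB (φ a) := by
    intro a
    have := DFunLike.congr_fun (CommRingCat.hom_ext_iff.mp hsq) a
    simpa using this
  obtain ⟨hjinj, hfrac⟩ := fracAux Y hη (f.base.hom.map_specializes hgen)
  obtain ⟨hiBinj, -⟩ := fracAux X rfl hgen
  have hψbij : Function.Bijective ψ0 := by
    have : IsIso ((forget CommRingCat).map ψ0) := inferInstance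
    exact (isIso_iff_bijective _).mp this
  -- injectivity of φ
  have hinj : Function.Injective φ := by
    intro a b hab
    apply hjinj
    apply hψbij.1
    rw [hsq' a, hsq' b, hab]
  -- flatness setup
  letI : Algebra A B := φ.hom.toAlgebra
  haveI : Module.Flat A B := hflat x
  have hsmul : ∀ (a : A) (b : B), a • b = φ a * b := by
    intro a b
    rw [Algebra.smul_def, RingHom.algebraMap_toAlgebra]
  -- surjectivity of φ
  have hsurj : Function.Surjective φ := by
    intro b
    obtain ⟨k, hk⟩ := hψbij.2 (iB b)
    obtain ⟨p, q, hq0, hpq⟩ := hfrac k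
    -- transport the relation to B
    have hQ : iB (φ q) ≠ 0 := by
      rw [← hsq' q]
      intro hzero
      exact hq0 (hψbij.1 (by rw [hzero, map_zero]))
    have hrelB : b * φ q = φ p := by
      apply hiBinj
      rw [map_mul, ← hsq' q, ← hsq' p, ← hk, ← map_mul]
      exact congrArg ψ0 hpq
    -- the relation q • b + (-p) • 1 = 0 in B
    have hrel : ∑ i : ULift.{u} (Fin 2),
        (if i.down = 0 then q else -p) • (if i.down = 0 then b else (1 : B)) = 0 := by
      rw [← Equiv.sum_comp (Equiv.ulift.symm :
        Fin 2 ≃ ULift.{u} (Fin 2)), Fin.sum_univ_two]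
      simp only [Equiv.ulift]
      norm_num [hsmul]
      rw [mul_comm]
      rw [hrelB]
      ring
    obtain ⟨κ, a, yv, hx, ha⟩ := Module.Flat.isTrivialRelation_of_sum_smul_eq_zero (R := ↑A) (M := ↑B) hrel
    have h1B : (1 : B) = ∑ j, a ⟨1⟩ j • yv j := by simpa using hx ⟨1⟩
    -- find an index where a ⟨1⟩ j is a unit
    have hexists : ∃ j, IsUnit (a ⟨1⟩ j) := by
      by_contra hnone
      push_neg at hnone
      have hmem : (1 : B) ∈ IsLocalRing.maximalIdeal B := by
        rw [h1B]
        apply Ideal.sum_mem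
        intro j _
        rw [hsmul]
        apply Ideal.mul_mem_right
        rw [IsLocalRing.mem_maximalIdeal, mem_nonunits_iff]
        intro hu
        exact hnone j (IsLocalHom.map_nonunit _ hu)
      exact (IsLocalRing.maximalIdeal.isMaximal B).ne_top (Ideal.eq_top_of_isUnit_mem _ hmem isUnit_one)
    obtain ⟨j0, hj0⟩ := hexists
    obtain ⟨v, hv⟩ := hj0
    -- the coefficient relation at j0
    have hcoef : q * a ⟨0⟩ j0 = p * a ⟨1⟩ j0 := by
      have := ha j0
      rw [← Equiv.sum_comp (Equiv.ulift.symm :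
        Fin 2 ≃ ULift.{u} (Fin 2)), Fin.sum_univ_two] at this
      simp only [Equiv.ulift] at this
      norm_num at this
      linear_combination this
    refine ⟨a ⟨0⟩ j0 * (↑v⁻¹ : A), ?_⟩
    have hqa : q * (a ⟨0⟩ j0 * (↑v⁻¹ : A)) = p := by
      rw [← mul_assoc, hcoef, ← hv, mul_assoc, Units.mul_inv, mul_one]
    -- conclude by injectivity of iB and cancellation in the function field
    apply hiBinj
    have hfield : iB (φ q) * iB b = iB (φ q) * iB (φ (a ⟨0⟩ j0 * (↑v⁻¹ : A))) := by
      rw [← map_mul, ← map_mul, ← map_mul]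
      congr 1
      rw [mul_comm (φ q) b, hrelB, ← hqa, map_mul]
    exact (mul_left_cancel₀ hQ hfield).symm
  -- conclude
  have : IsIso ((forget CommRingCat).map φ) := by
    rw [isIso_iff_bijective]
    exact ⟨hinj, hsurj⟩
  exact isIso_of_reflects_iso φ (forget CommRingCat)
end
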